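/- Let Y be a standard normal random variable and let G : [0,∞) → ℝ be a monotone (nondecreasing or nonincreasing), right-continuous, non-constant function such that E|G(|Y|)|^{1+θ} < ∞ for some θ ∈ (0,1]. Then E[Y G(|Y|)] = 0 and E[(Y² − 1) G(|Y|)] ≠ 0; moreover E[(Y² − 1) G(|Y|)] > 0 if G is nondecreasing and < 0 if G is nonincreasing. In particular, the Hermite rank of y ↦ G(|y|) equals 2. -/

import Mathlib

open MeasureTheory ProbabilityTheory Set Filter

noncomputable section

local notation "μ₀" => gaussianReal 0 1

lemma gaussianPDFReal_std (x : ℝ) : gaussianPDFReal 0 1 x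
    = (Real.sqrt (2 * Real.pi))⁻¹ * Real.exp (-(1/2:ℝ) * x ^ 2) := by
  simp only [gaussianPDFReal, NNReal.coe_one, mul_one, sub_zero]
  congr 1
  ring_nf

lemma aux_exp_integrable (c : ℝ) :
    Integrable (fun y => Real.exp (c * |y|)) μ₀ := by
  rw [gaussianReal_of_var_ne_zero 0 one_ne_zero,
    integrable_withDensity_iff (measurable_gaussianPDF 0 1)
      (Eventually.of_forall fun x => ENNReal.ofReal_lt_top)]
  have hpdf : ∀ x : ℝ, (gaussianPDF 0 1 x).toReal = gaussianPDFReal 0 1 x := fun x =>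
    ENNReal.toReal_ofReal (gaussianPDFReal_nonneg 0 1 x)
  simp only [hpdf]
  refine Integrable.mono' (g := fun x => ((Real.sqrt (2 * Real.pi))⁻¹ * Real.exp (c ^ 2)) *
      Real.exp (-(1/4 : ℝ) * x ^ 2))
    (((integrable_exp_neg_mul_sq (by norm_num : (0:ℝ) < 1/4)).const_mul _)) ?_
    (Eventually.of_forall fun x => ?_)
  · exact ((Real.measurable_exp.comp (measurable_const.mul measurable_abs)).mul
      (measurable_gaussianPDFReal 0 1)).aestronglyMeasurable
  · have h0 : 0 ≤ Real.exp (c * |x|) * gaussianPDFReal 0 1 x :=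
      mul_nonneg (Real.exp_nonneg _) (gaussianPDFReal_nonneg 0 1 x)
    rw [Real.norm_eq_abs, abs_of_nonneg h0, gaussianPDFReal_std]
    have key : Real.exp (c * |x|) * Real.exp (-(1/2:ℝ) * x ^ 2) ≤
        Real.exp (c ^ 2) * Real.exp (-(1/4 : ℝ) * x ^ 2) := by
      rw [← Real.exp_add, ← Real.exp_add, Real.exp_le_exp]
      nlinarith [sq_nonneg (|x| / 2 - c), sq_abs x]
    have hs : (0:ℝ) ≤ (Real.sqrt (2 * Real.pi))⁻¹ := by positivity
    calc Real.exp (c * |x|) * ((Real.sqrt (2 * Real.pi))⁻¹ * Real.exp (-(1/2:ℝ) * x ^ 2))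
        = (Real.sqrt (2 * Real.pi))⁻¹ * (Real.exp (c * |x|) * Real.exp (-(1/2:ℝ) * x ^ 2)) := by
          ring
      _ ≤ (Real.sqrt (2 * Real.pi))⁻¹ * (Real.exp (c ^ 2) * Real.exp (-(1/4:ℝ) * x ^ 2)) :=
          mul_le_mul_of_nonneg_left key hs
      _ = (Real.sqrt (2 * Real.pi))⁻¹ * Real.exp (c ^ 2) * Real.exp (-(1/4:ℝ) * x ^ 2) := by ring

lemma aux_rpow_le_exp {a p : ℝ} (ha : 0 ≤ a) (hp : 0 ≤ p) : a ^ p ≤ Real.exp (p * a) := by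
  rcases eq_or_lt_of_le ha with h | h
  · rcases eq_or_lt_of_le hp with h' | h'
    · simp [← h', Real.rpow_zero]
    · rw [← h, Real.zero_rpow h'.ne']
      exact Real.exp_nonneg _
  · rw [Real.rpow_def_of_pos h, Real.exp_le_exp]
    rw [mul_comm]
    exact mul_le_mul_of_nonneg_left
      ((Real.log_le_sub_one_of_pos h).trans (sub_le_self a zero_le_one)) hp

lemma aux_int_rpow {p : ℝ} (hp : 0 ≤ p) :
    Integrable (fun y : ℝ => |y| ^ p) μ₀ := by
  refine (aux_exp_integrable p).mono' ?_ (Eventually.of_forall fun x => ?_)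
  · have : Measurable fun y : ℝ => |y| ^ p := by fun_prop (disch := assumption)
    exact this.aestronglyMeasurable
  · rw [Real.norm_eq_abs, abs_of_nonneg (Real.rpow_nonneg (abs_nonneg x) p)]
    exact aux_rpow_le_exp (abs_nonneg x) hp

lemma aux_int_sq_rpow {p : ℝ} (hp : 0 ≤ p) :
    Integrable (fun y : ℝ => |y ^ 2 - 1| ^ p) μ₀ := by
  refine ((aux_exp_integrable (2 * p)).const_mul (Real.exp (2 * p))).mono'
    ?_ (Eventually.of_forall fun x => ?_)
  · have : Measurable fun y : ℝ => |y ^ 2 - 1| ^ p := by fun_prop (disch := assumption)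
    exact this.aestronglyMeasurable
  · rw [Real.norm_eq_abs, abs_of_nonneg (Real.rpow_nonneg (abs_nonneg _) p)]
    have h1 : |x ^ 2 - 1| ≤ (|x| + 1) ^ 2 := by
      rw [abs_le]
      constructor <;> nlinarith [abs_nonneg x, sq_abs x]
    have h2 : |x ^ 2 - 1| ^ p ≤ ((|x| + 1) ^ 2) ^ p :=
      Real.rpow_le_rpow (abs_nonneg _) h1 hp
    have h3 : ((|x| + 1) ^ 2) ^ p = (|x| + 1) ^ (2 * p) := by
      rw [← Real.rpow_natCast (|x| + 1) 2, ← Real.rpow_mul (by positivity)]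
      norm_num
    have h4 : (|x| + 1) ^ (2 * p) ≤ Real.exp ((2 * p) * (|x| + 1)) :=
      aux_rpow_le_exp (by positivity) (by positivity)
    have h5 : Real.exp ((2 * p) * (|x| + 1)) = Real.exp (2 * p) * Real.exp (2 * p * |x|) := by
      rw [← Real.exp_add]; ring_nf
    calc |x ^ 2 - 1| ^ p ≤ ((|x| + 1) ^ 2) ^ p := h2
      _ = (|x| + 1) ^ (2 * p) := h3
      _ ≤ Real.exp ((2 * p) * (|x| + 1)) := h4
      _ = Real.exp (2 * p) * Real.exp (2 * p * |x|) := h5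

lemma aux_int_sq_sub_one : Integrable (fun y : ℝ => y ^ 2 - 1) μ₀ := by
  have h := aux_int_sq_rpow (p := 1) zero_le_one
  simp only [Real.rpow_one] at h
  simp only [← Real.norm_eq_abs] at h
  exact (integrable_norm_iff
    ((measurable_id.pow_const 2).sub_const 1).aestronglyMeasurable).mp h

lemma aux_deriv_int : Integrable (fun x : ℝ => (x ^ 2 - 1) * Real.exp (-(1/2:ℝ) * x ^ 2)) := by
  refine ((integrable_exp_neg_mul_sq (by norm_num : (0:ℝ) < 1/4)).const_mul 4).mono'
    ?_ (Eventually.of_forall fun x => ?_)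
  · exact (((measurable_id.pow_const 2).sub_const 1).mul
      (Real.measurable_exp.comp ((measurable_id.pow_const 2).const_mul _))).aestronglyMeasurable
  · rw [Real.norm_eq_abs, abs_mul, abs_of_nonneg (Real.exp_nonneg _)]
    have h1 : |x ^ 2 - 1| ≤ 4 * Real.exp ((1/4:ℝ) * x ^ 2) := by
      have := Real.add_one_le_exp ((1/4:ℝ) * x ^ 2)
      rw [abs_le]
      constructor <;> nlinarith [Real.exp_nonneg ((1/4:ℝ) * x ^ 2)]
    calc |x ^ 2 - 1| * Real.exp (-(1/2:ℝ) * x ^ 2)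
        ≤ (4 * Real.exp ((1/4:ℝ) * x ^ 2)) * Real.exp (-(1/2:ℝ) * x ^ 2) :=
          mul_le_mul_of_nonneg_right h1 (Real.exp_nonneg _)
      _ = 4 * Real.exp (-(1/4:ℝ) * x ^ 2) := by
          rw [mul_assoc, ← Real.exp_add]; ring_nf

lemma aux_tendsto_top :
    Tendsto (fun x : ℝ => x * Real.exp (-(1/2:ℝ) * x ^ 2)) atTop (nhds 0) := by
  have hlo := rpow_mul_exp_neg_mul_sq_isLittleO_exp_neg (b := (1/2:ℝ)) (by norm_num) 1
  have htz : Tendsto (fun x : ℝ => Real.exp (-(1/2:ℝ) * x)) atTop (nhds 0) := by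
    apply Real.tendsto_exp_atBot.comp
    have h2 : Tendsto (fun x : ℝ => (1/2:ℝ) * x) atTop atTop :=
      tendsto_id.const_mul_atTop (by norm_num)
    have h3 := tendsto_neg_atTop_atBot.comp h2
    have heq : (Neg.neg ∘ fun x : ℝ => (1/2:ℝ) * x) = fun x : ℝ => -(1/2:ℝ) * x := by
      funext x; show -((1/2:ℝ) * x) = -(1/2:ℝ) * x; ring
    rwa [heq] at h3
  have h0 := hlo.isBigO.trans_tendsto htz
  simpa [Real.rpow_one] using h0

lemma aux_integral_hermite2 :
    ∫ x : ℝ, (x ^ 2 - 1) * Real.exp (-(1/2:ℝ) * x ^ 2) = 0 := by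
  have hderiv : ∀ x : ℝ, HasDerivAt (fun x : ℝ => -x * Real.exp (-(1/2:ℝ) * x ^ 2))
      ((x ^ 2 - 1) * Real.exp (-(1/2:ℝ) * x ^ 2)) x := by
    intro x
    have h1 : HasDerivAt (fun x : ℝ => -(1/2:ℝ) * x ^ 2) (-(1/2:ℝ) * (2 * x)) x :=
      (hasDerivAt_pow 2 x).const_mul (-(1/2:ℝ)) |>.congr_deriv (by norm_num)
    have h2 : HasDerivAt (fun x : ℝ => Real.exp (-(1/2:ℝ) * x ^ 2))
        (Real.exp (-(1/2:ℝ) * x ^ 2) * (-(1/2:ℝ) * (2 * x))) x := h1.exp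
    have h3 : HasDerivAt (fun x : ℝ => -x) (-1) x := (hasDerivAt_id x).neg
    have : HasDerivAt (fun x : ℝ => -x * Real.exp (-(1/2:ℝ) * x ^ 2)) _ x := h3.mul h2
    convert this using 1
    ring
  have hbot : Tendsto (fun x : ℝ => -x * Real.exp (-(1/2:ℝ) * x ^ 2)) atBot (nhds 0) := by
    have := aux_tendsto_top.comp tendsto_neg_atBot_atTop
    have heq : (fun x : ℝ => x * Real.exp (-(1/2:ℝ) * x ^ 2)) ∘ (fun x : ℝ => -x)
        = fun x : ℝ => -x * Real.exp (-(1/2:ℝ) * x ^ 2) := by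
      funext x; simp [Function.comp, neg_sq]
    rwa [heq] at this
  have htop : Tendsto (fun x : ℝ => -x * Real.exp (-(1/2:ℝ) * x ^ 2)) atTop (nhds 0) := by
    simpa [neg_zero] using aux_tendsto_top.neg
  have := MeasureTheory.integral_of_hasDerivAt_of_tendsto hderiv aux_deriv_int hbot htop
  simpa using this

lemma aux_integral_sq_sub_one : ∫ y : ℝ, (y ^ 2 - 1) ∂μ₀ = 0 := by
  rw [gaussianReal_of_var_ne_zero 0 one_ne_zero]
  have hrw : (Measure.withDensity volume (gaussianPDF 0 1))
      = Measure.withDensity volume (fun x => ((gaussianPDFReal 0 1 x).toNNReal : ENNReal)) := rfl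
  rw [hrw, integral_withDensity_eq_integral_smul (measurable_gaussianPDFReal 0 1).real_toNNReal]
  have h1 : ∀ x : ℝ, (gaussianPDFReal 0 1 x).toNNReal • (x ^ 2 - 1)
      = (Real.sqrt (2 * Real.pi))⁻¹ * ((x ^ 2 - 1) * Real.exp (-(1/2:ℝ) * x ^ 2)) := by
    intro x
    rw [NNReal.smul_def, smul_eq_mul, Real.coe_toNNReal _ (gaussianPDFReal_nonneg 0 1 x),
      gaussianPDFReal_std]
    ring
  simp only [h1]
  rw [integral_const_mul, aux_integral_hermite2, mul_zero]

lemma aux_map_neg : Measure.map (fun y : ℝ => -y) μ₀ = μ₀ := by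
  have h := gaussianReal_map_const_mul (μ := 0) (v := 1) (-1)
  have h1 : ((-1 : ℝ) * ·) = (fun y : ℝ => -y) := by funext y; simp
  have h2 : (⟨(-1:ℝ)^2, sq_nonneg _⟩ : NNReal) * 1 = 1 := by ext; norm_num
  rw [h1] at h
  simpa [h2] using h

lemma aux_integral_odd (f : ℝ → ℝ) (hf : AEStronglyMeasurable f μ₀)
    (hodd : ∀ y, f (-y) = -f y) : ∫ y, f y ∂μ₀ = 0 := by
  have hm : AEStronglyMeasurable f (Measure.map (fun y : ℝ => -y) μ₀) := by
    rwa [aux_map_neg]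
  have h1 : ∫ y, f y ∂μ₀ = ∫ y, f (-y) ∂μ₀ := by
    conv_lhs => rw [← aux_map_neg]
    exact integral_map measurable_neg.aemeasurable hm
  simp only [hodd] at h1
  rw [integral_neg] at h1
  linarith

lemma key_pos {G : ℝ → ℝ} (hmono : MonotoneOn G (Set.Ici 0))
    (hGrc : ∀ x ≥ (0:ℝ), ContinuousWithinAt G (Set.Ici x) x)
    (hGnc : ∃ x ∈ Set.Ici (0:ℝ), ∃ y ∈ Set.Ici (0:ℝ), G x ≠ G y)
    (hInt : Integrable (fun y : ℝ => (y ^ 2 - 1) * G |y|) μ₀) :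
    0 < ∫ y, (y ^ 2 - 1) * G |y| ∂μ₀ := by
  have hInt1 : Integrable (fun y : ℝ => (y ^ 2 - 1) * G 1) μ₀ :=
    aux_int_sq_sub_one.mul_const _
  have hdiff : (fun y : ℝ => (y ^ 2 - 1) * (G |y| - G 1))
      = fun y : ℝ => (y ^ 2 - 1) * G |y| - (y ^ 2 - 1) * G 1 :=
    funext fun y => mul_sub _ _ _
  have hInth : Integrable (fun y : ℝ => (y ^ 2 - 1) * (G |y| - G 1)) μ₀ := by
    rw [hdiff]; exact hInt.sub hInt1
  have nonneg : ∀ y : ℝ, 0 ≤ (y ^ 2 - 1) * (G |y| - G 1) := by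
    intro y
    rcases le_total (|y|) 1 with hy | hy
    · have h1 : y ^ 2 ≤ 1 := by nlinarith [sq_abs y, abs_nonneg y]
      have h2 : G |y| ≤ G 1 :=
        hmono (mem_Ici.mpr (abs_nonneg y)) (mem_Ici.mpr zero_le_one) hy
      exact mul_nonneg_of_nonpos_of_nonpos (by linarith) (by linarith)
    · have h1 : 1 ≤ y ^ 2 := by nlinarith [sq_abs y]
      have h2 : G 1 ≤ G |y| :=
        hmono (mem_Ici.mpr zero_le_one) (mem_Ici.mpr (abs_nonneg y)) hy
      exact mul_nonneg (by linarith) (by linarith)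
  have hx0 : ∃ x₀, 0 ≤ x₀ ∧ G x₀ ≠ G 1 := by
    obtain ⟨x, hx, y, hy, hxy⟩ := hGnc
    by_cases h : G x = G 1
    · exact ⟨y, hy, fun hc => hxy (h.trans hc.symm)⟩
    · exact ⟨x, hx, h⟩
  obtain ⟨x₀, hx₀, hne⟩ := hx0
  have hIoo : ∃ a b : ℝ, a < b ∧ ∀ t ∈ Set.Ioo a b, 0 < (t ^ 2 - 1) * (G |t| - G 1) := by
    rcases hne.lt_or_gt with hlt | hgt
    · have hx1 : x₀ < 1 := by
        by_contra hc; push_neg at hc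
        exact absurd (hmono (mem_Ici.mpr zero_le_one) (mem_Ici.mpr hx₀) hc)
          (not_le.mpr hlt)
      have hev : ∀ᶠ t in nhdsWithin x₀ (Set.Ici x₀), G t < G 1 :=
        (hGrc x₀ hx₀).eventually_lt_const hlt
      have hmem : {t : ℝ | G t < G 1} ∈ nhdsWithin x₀ (Set.Ici x₀) := hev
      obtain ⟨u, hu, hsub⟩ := mem_nhdsGE_iff_exists_Ico_subset.mp hmem
      refine ⟨x₀, min u 1, lt_min hu hx1, fun t ht => ?_⟩
      have ht0 : 0 ≤ t := le_trans hx₀ (le_of_lt ht.1)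
      have habs : |t| = t := abs_of_nonneg ht0
      have htu : t < u := lt_of_lt_of_le ht.2 (min_le_left _ _)
      have ht1 : t < 1 := lt_of_lt_of_le ht.2 (min_le_right _ _)
      have hGt : G t < G 1 := hsub ⟨le_of_lt ht.1, htu⟩
      rw [habs]
      apply mul_pos_of_neg_of_neg
      · nlinarith
      · linarith
    · have hx1 : 1 < x₀ := by
        by_contra hc; push_neg at hc
        exact absurd (hmono (mem_Ici.mpr hx₀) (mem_Ici.mpr zero_le_one) hc)
          (not_le.mpr hgt)
      refine ⟨x₀, x₀ + 1, by linarith, fun t ht => ?_⟩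
      have ht0 : 0 < t := lt_trans (by linarith) ht.1
      have habs : |t| = t := abs_of_pos ht0
      have h1t : 1 < t := lt_trans hx1 ht.1
      have hGt : G 1 < G |t| := by
        rw [habs]
        exact lt_of_lt_of_le hgt
          (hmono (mem_Ici.mpr hx₀) (mem_Ici.mpr (le_of_lt ht0)) (le_of_lt ht.1))
      exact mul_pos (by nlinarith) (by linarith)
  obtain ⟨a, b, hab, hpos⟩ := hIoo
  have main : 0 < ∫ y, (y ^ 2 - 1) * (G |y| - G 1) ∂μ₀ := by
    refine (integral_pos_iff_support_of_nonneg nonneg hInth).mpr ?_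
    have hsub2 : Set.Ioo a b ⊆ Function.support (fun y : ℝ => (y ^ 2 - 1) * (G |y| - G 1)) :=
      fun t ht => (hpos t ht).ne'
    have hvol : volume (Set.Ioo a b) ≠ 0 := by
      rw [Real.volume_Ioo]
      simp only [ne_eq, ENNReal.ofReal_eq_zero, not_le]
      linarith
    have hμ : μ₀ (Set.Ioo a b) ≠ 0 :=
      fun hc => hvol (gaussianReal_absolutelyContinuous' 0 one_ne_zero hc)
    exact lt_of_lt_of_le (pos_iff_ne_zero.mpr hμ) (measure_mono hsub2)
  rw [hdiff, integral_sub hInt hInt1, integral_mul_const, aux_integral_sq_sub_one,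
    zero_mul, sub_zero] at main
  exact main

/-- for a monotone right-continuous non-constant `G` on `[0,∞)` with
`E|G(|Y|)|^{1+θ} < ∞`, one has `E[Y G(|Y|)] = 0` and `E[(Y²−1) G(|Y|)] ≠ 0`
(positive if `G` is nondecreasing, negative if `G` is nonincreasing); i.e. `y ↦ G(|y|)`
has Hermite rank 2. -/
theorem hermite_rank_two_abs {Ω : Type*} [MeasurableSpace Ω]
    (P : Measure Ω) [IsProbabilityMeasure P]
    (Y : Ω → ℝ) (hYmeas : Measurable Y)
    (hY : Measure.map Y P = gaussianReal 0 1)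
    (G : ℝ → ℝ)
    (hGmono : MonotoneOn G (Set.Ici 0) ∨ AntitoneOn G (Set.Ici 0))
    (hGrc : ∀ x ≥ (0 : ℝ), ContinuousWithinAt G (Set.Ici x) x)
    (hGnc : ∃ x ∈ Set.Ici (0 : ℝ), ∃ y ∈ Set.Ici (0 : ℝ), G x ≠ G y)
    (θ : ℝ) (hθ : θ ∈ Set.Ioc (0 : ℝ) 1)
    (hmom : Integrable (fun ω => abs (G |Y ω|) ^ (1 + θ)) P) :
    Integrable (fun ω => Y ω * G |Y ω|) P ∧
    (∫ ω, Y ω * G |Y ω| ∂P) = 0 ∧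
    Integrable (fun ω => (Y ω ^ 2 - 1) * G |Y ω|) P ∧
    (∫ ω, (Y ω ^ 2 - 1) * G |Y ω| ∂P) ≠ 0 ∧
    (MonotoneOn G (Set.Ici 0) → 0 < ∫ ω, (Y ω ^ 2 - 1) * G |Y ω| ∂P) ∧
    (AntitoneOn G (Set.Ici 0) → (∫ ω, (Y ω ^ 2 - 1) * G |Y ω| ∂P) < 0) := by
  obtain ⟨hθ0, hθ1⟩ := hθ
  set p : ℝ := (1 + θ) / θ with hp_def
  set q : ℝ := 1 + θ with hq_def
  have hpq : Real.HolderConjugate p q := by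
    rw [Real.holderConjugate_iff]
    constructor
    · rw [hp_def, lt_div_iff₀ hθ0]; linarith
    · rw [hp_def, hq_def, inv_div]
      field_simp
      ring
  have hp0 : 0 ≤ p := hpq.pos.le
  have hq0 : 0 ≤ q := hpq.symm.pos.le
  -- measurability of y ↦ G |y|
  have hGA : Measurable (fun y : ℝ => G |y|) := by
    have heq : (fun y : ℝ => G |y|) = (fun x : ℝ => G (max x 0)) ∘ abs := by
      funext y; simp [Function.comp, max_eq_left (abs_nonneg y)]
    rcases hGmono with hm | hm
    · have hGmax : Monotone (fun x : ℝ => G (max x 0)) := fun a b hab =>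
        hm (mem_Ici.mpr (le_max_right a 0)) (mem_Ici.mpr (le_max_right b 0))
          (max_le_max hab le_rfl)
      rw [heq]; exact hGmax.measurable.comp measurable_abs
    · have hGmax : Antitone (fun x : ℝ => G (max x 0)) := fun a b hab =>
        hm (mem_Ici.mpr (le_max_right a 0)) (mem_Ici.mpr (le_max_right b 0))
          (max_le_max hab le_rfl)
      rw [heq]; exact hGmax.measurable.comp measurable_abs
  have hg1m : Measurable (fun y : ℝ => y * G |y|) := measurable_id.mul hGA
  have hg2m : Measurable (fun y : ℝ => (y ^ 2 - 1) * G |y|) :=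
    ((measurable_id.pow_const 2).sub_const 1).mul hGA
  have hGqm : Measurable (fun y : ℝ => |G (|y|)| ^ (1 + θ)) := by
    have h1 : Measurable fun t : ℝ => |t| ^ (1 + θ) := by fun_prop
    exact h1.comp hGA
  -- transfer the moment condition to the Gaussian measure
  have hmomμ : Integrable (fun y : ℝ => |G (|y|)| ^ (1 + θ)) μ₀ := by
    rw [← hY]
    exact (integrable_map_measure (by rw [hY]; exact hGqm.aestronglyMeasurable)
      hYmeas.aemeasurable).mpr hmom
  -- integrability over the Gaussian measure via Young's inequality
  have hB1 : Integrable (fun y : ℝ => |y| ^ p / p + |G (|y|)| ^ q / q) μ₀ :=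
    ((aux_int_rpow hp0).div_const p).add (hmomμ.div_const q)
  have hIg1 : Integrable (fun y : ℝ => y * G |y|) μ₀ := by
    refine hB1.mono' hg1m.aestronglyMeasurable (Eventually.of_forall fun y => ?_)
    rw [Real.norm_eq_abs, abs_mul]
    exact Real.young_inequality_of_nonneg (abs_nonneg _) (abs_nonneg _) hpq
  have hB2 : Integrable (fun y : ℝ => |y ^ 2 - 1| ^ p / p + |G (|y|)| ^ q / q) μ₀ :=
    ((aux_int_sq_rpow hp0).div_const p).add (hmomμ.div_const q)
  have hIg2 : Integrable (fun y : ℝ => (y ^ 2 - 1) * G |y|) μ₀ := by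
    refine hB2.mono' hg2m.aestronglyMeasurable (Eventually.of_forall fun y => ?_)
    rw [Real.norm_eq_abs, abs_mul]
    exact Real.young_inequality_of_nonneg (abs_nonneg _) (abs_nonneg _) hpq
  -- transfer integrability back to P
  have hIg1P : Integrable (fun ω => Y ω * G |Y ω|) P := by
    have h := (integrable_map_measure (g := fun y : ℝ => y * G |y|)
      (by rw [hY]; exact hg1m.aestronglyMeasurable)
      hYmeas.aemeasurable).mp (by rw [hY]; exact hIg1)
    exact h
  have hIg2P : Integrable (fun ω => (Y ω ^ 2 - 1) * G |Y ω|) P := by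
    have h := (integrable_map_measure (g := fun y : ℝ => (y ^ 2 - 1) * G |y|)
      (by rw [hY]; exact hg2m.aestronglyMeasurable)
      hYmeas.aemeasurable).mp (by rw [hY]; exact hIg2)
    exact h
  -- transfer the integrals
  have hE1 : ∫ ω, Y ω * G |Y ω| ∂P = ∫ y, y * G |y| ∂μ₀ := by
    have h := integral_map (φ := Y) hYmeas.aemeasurable
      (f := fun y : ℝ => y * G |y|) (by rw [hY]; exact hg1m.aestronglyMeasurable)
    rw [hY] at h
    exact h.symm
  have hE2 : ∫ ω, (Y ω ^ 2 - 1) * G |Y ω| ∂P = ∫ y, (y ^ 2 - 1) * G |y| ∂μ₀ := by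
    have h := integral_map (φ := Y) hYmeas.aemeasurable
      (f := fun y : ℝ => (y ^ 2 - 1) * G |y|) (by rw [hY]; exact hg2m.aestronglyMeasurable)
    rw [hY] at h
    exact h.symm
  -- odd function integral vanishes
  have hzero : ∫ y, y * G |y| ∂μ₀ = 0 := by
    refine aux_integral_odd _ hg1m.aestronglyMeasurable fun y => ?_
    rw [abs_neg]; ring
  -- positivity in the monotone case (for arbitrary monotone hypothesis)
  have hmonopos : MonotoneOn G (Set.Ici 0) → 0 < ∫ y, (y ^ 2 - 1) * G |y| ∂μ₀ :=
    fun hm => key_pos hm hGrc hGnc hIg2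
  have hantineg : AntitoneOn G (Set.Ici 0) → (∫ y, (y ^ 2 - 1) * G |y| ∂μ₀) < 0 := by
    intro ha
    have hmono' : MonotoneOn (fun x => -G x) (Set.Ici 0) :=
      fun a haa b hbb hab => neg_le_neg (ha haa hbb hab)
    have hrc' : ∀ x ≥ (0:ℝ), ContinuousWithinAt (fun x => -G x) (Set.Ici x) x :=
      fun x hx => (hGrc x hx).neg
    have hnc' : ∃ x ∈ Set.Ici (0:ℝ), ∃ y ∈ Set.Ici (0:ℝ), -G x ≠ -G y := by
      obtain ⟨x, hx, y, hy, hxy⟩ := hGnc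
      exact ⟨x, hx, y, hy, fun h => hxy (neg_injective h)⟩
    have heq : (fun y : ℝ => (y ^ 2 - 1) * (-G |y|)) = fun y : ℝ => -((y ^ 2 - 1) * G |y|) :=
      funext fun y => mul_neg _ _
    have hInt' : Integrable (fun y : ℝ => (y ^ 2 - 1) * (-G |y|)) μ₀ := by
      rw [heq]; exact hIg2.neg
    have h := key_pos hmono' hrc' hnc' hInt'
    rw [heq, integral_neg] at h
    linarith
  refine ⟨hIg1P, by rw [hE1]; exact hzero, hIg2P, ?_, fun hm => by
    rw [hE2]; exact hmonopos hm, fun ha => by rw [hE2]; exact hantineg ha⟩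
  rcases hGmono with hm | ha
  · rw [hE2]; exact (hmonopos hm).ne'
  · rw [hE2]; exact (hantineg ha).ne

end
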